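/- Under the hypotheses of the previous commutation setup applied to both A and D (with coefficients a₁, a₂ and d₁, d₂ respectively and the corresponding consistency identities), if Ψ₀ is a vector with A(u)Ψ₀ = α(u)Ψ₀ and D(u)Ψ₀ = δ(u)Ψ₀ for scalar functions α, δ, and if the Bethe equations α(u_k)a₂(u,u_k)∏_{i≠k} a₁(u_k,u_i) + δ(u_k)d₂(u,u_k)∏_{i≠k} d₁(u_k,u_i) = 0 hold for all 1 ≤ k ≤ n, then T(u) = A(u) + D(u) satisfies T(u)Ψₙ = τₙ(u)Ψₙ where Ψₙ = B(u₁)⋯B(uₙ)Ψ₀ and τₙ(u) = α(u)∏_{k=1}^{n} a₁(u,u_k) + δ(u)∏_{k=1}^{n} d₁(u,u_k). -/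

import Mathlib

noncomputable section BetheAux

variable {V : Type*} [AddCommGroup V] [Module ℂ V]

def Pset (B : ℂ → Module.End ℂ V) (us : ℕ → ℂ)
    (hBB : ∀ u v, B u * B v = B v * B u) (s : Finset ℕ) : Module.End ℂ V :=
  s.noncommProd (fun k => B (us k)) (fun a _ b _ _ => hBB (us a) (us b))

theorem Pset_empty (B : ℂ → Module.End ℂ V) (us : ℕ → ℂ)
    (hBB : ∀ u v, B u * B v = B v * B u) : Pset B us hBB ∅ = 1 := by
  simp only [Pset]
  exact Finset.noncommProd_empty _ _

theorem Pset_insert (B : ℂ → Module.End ℂ V) (us : ℕ → ℂ)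
    (hBB : ∀ u v, B u * B v = B v * B u) (s : Finset ℕ) (a : ℕ) (ha : a ∉ s) :
    Pset B us hBB (insert a s) = B (us a) * Pset B us hBB s := by
  simp only [Pset]
  exact Finset.noncommProd_insert_of_notMem _ _ _ _ ha

theorem Pset_commute (B : ℂ → Module.End ℂ V) (us : ℕ → ℂ)
    (hBB : ∀ u v, B u * B v = B v * B u) (s : Finset ℕ) (v : ℂ) :
    B v * Pset B us hBB s = Pset B us hBB s * B v := by
  exact (Finset.noncommProd_commute _ _ _ _ (fun x _ => hBB v (us x))).eq

theorem bethe_key (A B : ℂ → Module.End ℂ V) (a1 a2 : ℂ → ℂ → ℂ)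
    (hAB : ∀ u v, A u * B v = a1 u v • (B v * A u) + a2 u v • (B u * A v))
    (hBB : ∀ u v, B u * B v = B v * B u)
    (hId : ∀ u v w, a1 u w * a2 u v + a2 u w * a2 w v = a2 u v * a1 v w)
    (us : ℕ → ℂ) :
    ∀ (n : ℕ) (u : ℂ),
      A u * Pset B us hBB (Finset.range n)
        = (∏ k ∈ Finset.range n, a1 u (us k)) •
            (Pset B us hBB (Finset.range n) * A u)
          + ∑ k ∈ Finset.range n,
              (a2 u (us k) * ∏ i ∈ (Finset.range n).erase k, a1 (us k) (us i)) •
                (B u * Pset B us hBB ((Finset.range n).erase k) * A (us k)) := by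
  intro n
  induction n with
  | zero => intro u; simp [Pset_empty]
  | succ n ih =>
    intro u
    have hmem : n ∉ Finset.range n := Finset.notMem_range_self
    rw [Finset.range_add_one, Pset_insert _ _ _ _ _ hmem, Finset.prod_insert hmem,
      Finset.sum_insert hmem, Finset.erase_insert hmem]
    rw [← mul_assoc, hAB u (us n), add_mul, smul_mul_assoc, smul_mul_assoc,
      mul_assoc, mul_assoc, ih u, ih (us n)]
    simp only [mul_add, Finset.mul_sum, mul_smul_comm, smul_add, smul_smul, Finset.smul_sum]
    rw [add_add_add_comm, ← Finset.sum_add_distrib]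
    conv_rhs => rw [← add_assoc]
    refine congrArg₂ (· + ·) (congrArg₂ (· + ·) ?_ ?_) ?_
    · rw [mul_assoc]
    · rw [mul_assoc]
    · apply Finset.sum_congr rfl
      intro k hk
      have hkn : k ≠ n := Nat.ne_of_lt (Finset.mem_range.mp hk)
      have hne : n ∉ (Finset.range n).erase k := fun h => hmem (Finset.mem_of_mem_erase h)
      rw [Finset.erase_insert_of_ne (Ne.symm hkn), Pset_insert _ _ _ _ _ hne,
        Finset.prod_insert hne]
      simp only [← mul_assoc]
      rw [hBB (us n) u, ← add_smul]
      congr 1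
      have := hId u (us k) (us n)
      linear_combination (∏ i ∈ (Finset.range n).erase k, a1 (us k) (us i)) * this

theorem Pset_list (B : ℂ → Module.End ℂ V) (us : ℕ → ℂ)
    (hBB : ∀ u v, B u * B v = B v * B u) :
    ∀ n : ℕ, ((List.range n).map (fun k => B (us k))).prod
      = Pset B us hBB (Finset.range n) := by
  intro n
  induction n with
  | zero => simp [Pset_empty]
  | succ n ih =>
    rw [List.range_succ, List.map_append, List.prod_append, Finset.range_add_one,
      Pset_insert _ _ _ _ _ Finset.notMem_range_self, ih, List.map_singleton,
      List.prod_singleton, Pset_commute]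

end BetheAux

theorem stmt_7 {V : Type*} [AddCommGroup V] [Module ℂ V]
    (A D B : ℂ → Module.End ℂ V) (a1 a2 d1 d2 : ℂ → ℂ → ℂ) (α δ : ℂ → ℂ)
    (Ψ₀ : V)
    (hAB : ∀ u v, A u * B v = a1 u v • (B v * A u) + a2 u v • (B u * A v))
    (hDB : ∀ u v, D u * B v = d1 u v • (B v * D u) + d2 u v • (B u * D v))
    (hBB : ∀ u v, B u * B v = B v * B u)
    (hIda : ∀ u v w, a1 u w * a2 u v + a2 u w * a2 w v = a2 u v * a1 v w)
    (hIdd : ∀ u v w, d1 u w * d2 u v + d2 u w * d2 w v = d2 u v * d1 v w)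
    (hA0 : ∀ u, A u Ψ₀ = α u • Ψ₀) (hD0 : ∀ u, D u Ψ₀ = δ u • Ψ₀)
    (n : ℕ) (u : ℂ) (us : ℕ → ℂ)
    (hBethe : ∀ k ∈ Finset.range n,
      α (us k) * a2 u (us k) * ∏ i ∈ (Finset.range n).erase k, a1 (us k) (us i)
        + δ (us k) * d2 u (us k) * ∏ i ∈ (Finset.range n).erase k, d1 (us k) (us i) = 0) :
    (A u + D u) (((List.range n).map (fun k => B (us k))).prod Ψ₀)
    = (α u * ∏ k ∈ Finset.range n, a1 u (us k)
        + δ u * ∏ k ∈ Finset.range n, d1 u (us k)) •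
        (((List.range n).map (fun k => B (us k))).prod Ψ₀) := by
  rw [Pset_list B us hBB n]
  have hA := congrArg (fun f : Module.End ℂ V => f Ψ₀)
    (bethe_key A B a1 a2 hAB hBB hIda us n u)
  have hD := congrArg (fun f : Module.End ℂ V => f Ψ₀)
    (bethe_key D B d1 d2 hDB hBB hIdd us n u)
  simp only [Module.End.mul_apply, LinearMap.add_apply, LinearMap.smul_apply,
    LinearMap.sum_apply, hA0, hD0, map_smul] at hA hD ⊢
  rw [hA, hD]
  have hz : ∀ k ∈ Finset.range n,
      (a2 u (us k) * ∏ i ∈ (Finset.range n).erase k, a1 (us k) (us i)) •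
        α (us k) • (B u) ((Pset B us hBB ((Finset.range n).erase k)) Ψ₀)
      + (d2 u (us k) * ∏ i ∈ (Finset.range n).erase k, d1 (us k) (us i)) •
        δ (us k) • (B u) ((Pset B us hBB ((Finset.range n).erase k)) Ψ₀) = 0 := by
    intro k hk
    rw [smul_smul, smul_smul, ← add_smul]
    have h0 := hBethe k hk
    have : a2 u (us k) * (∏ i ∈ (Finset.range n).erase k, a1 (us k) (us i)) * α (us k)
        + d2 u (us k) * (∏ i ∈ (Finset.range n).erase k, d1 (us k) (us i)) * δ (us k) = 0 := by
      linear_combination h0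
    rw [this, zero_smul]
  rw [add_add_add_comm, ← Finset.sum_add_distrib, Finset.sum_congr rfl hz,
    Finset.sum_const_zero, add_zero, smul_comm, smul_comm (∏ k ∈ Finset.range n, d1 u (us k)),
    smul_smul, smul_smul, ← add_smul]
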